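/- Landscape Law, upper bound (Theorem 1.2(i)): Let Γ satisfy volume control with parameters (α,c_L,c_U) and the weak Poincaré inequality with constants (C_P,λ), and fix b ≥ 1. Then there exists a constant C > 0, depending only on α, c_L, c_U, C_P, λ and b, such that for every finite nonempty A ⊆ 𝕍, all symmetric bond weights μ_{xy} ∈ [0,1] and potentials V_x ≥ 0, every E > 0, and every countable covering 𝒫 of 𝕍 by balls of radius (CE)^{-1/2} with finite overlap constant b, one has N^A(E) ≤ N_u^{𝒫,A}(CE). -/

import Mathlib

open scoped BigOperators

namespace LandscapeGraph

variable {V : Type*}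

/-- Ball of real radius `r` with respect to the shortest-path graph metric. -/
def gball (G : SimpleGraph V) (x : V) (r : ℝ) : Set V :=
  {y | G.Reachable x y ∧ (G.dist x y : ℝ) ≤ r}

/-- The degree of a vertex, as a real number. -/
noncomputable def ndeg (G : SimpleGraph V) (x : V) : ℝ := ((G.neighborSet x).ncard : ℝ)

/-- The graph Laplacian `Δf(x) = Σ_{y∼x} (f(y) - f(x))`. -/
noncomputable def lap (G : SimpleGraph V) (f : V → ℝ) (x : V) : ℝ :=
  ∑ᶠ y ∈ G.neighborSet x, (f y - f x)

/-- Volume control (Ahlfors `α`-regularity) with parameters `(α, cL, cU)`. -/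
def VolCtrl (G : SimpleGraph V) (α cL cU : ℝ) : Prop :=
  ∀ x : V, ∀ r : ℝ, 1 ≤ r →
    cL * r ^ α ≤ ((gball G x r).ncard : ℝ) ∧ ((gball G x r).ncard : ℝ) ≤ cU * r ^ α

/-- Degree-weighted average of `f` over a set `S`. -/
noncomputable def wavg (G : SimpleGraph V) (S : Set V) (f : V → ℝ) : ℝ :=
  (∑ᶠ z ∈ S, f z * ndeg G z) / ∑ᶠ z ∈ S, ndeg G z

/-- The Dirichlet-type energy `Σ_{z,w∈S, z∼w} (f z - f w)²` (over ordered pairs). -/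
noncomputable def pairEnergy (G : SimpleGraph V) (S : Set V) (f : V → ℝ) : ℝ :=
  ∑ᶠ z ∈ S, ∑ᶠ w ∈ {w ∈ S | G.Adj z w}, (f z - f w) ^ 2

/-- The weak Poincaré inequality with constants `(CP, lam)`. -/
def WeakPI (G : SimpleGraph V) (CP lam : ℝ) : Prop :=
  ∀ x : V, ∀ r : ℝ, 1 ≤ r → ∀ f : V → ℝ,
    (∑ᶠ z ∈ gball G x r, (f z - wavg G (gball G x r) f) ^ 2) ≤
      CP * r ^ 2 * pairEnergy G (gball G x (lam * r)) f

/-- The Dirichlet restriction `H^A` of the Jacobi operator, acting on functions. -/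
noncomputable def HAop (G : SimpleGraph V) (μ : V → V → ℝ) (Vpot : V → ℝ) (A : Set V)
    (f : V → ℝ) (x : V) : ℝ :=
  ndeg G x * f x - (∑ᶠ y ∈ {y ∈ A | G.Adj x y}, μ x y * f y) + Vpot x * f x

/-- Symmetric bond weights with values in `[0,1]`. -/
def BondWeights (G : SimpleGraph V) (μ : V → V → ℝ) : Prop :=
  ∀ x y, G.Adj x y → μ x y = μ y x ∧ 0 ≤ μ x y ∧ μ x y ≤ 1

/-- `u` is the landscape function of `H^A`: positive on `A` and solving `H^A u = 1` on `A`. -/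
def IsLandscape (G : SimpleGraph V) (μ : V → V → ℝ) (Vpot : V → ℝ) (A : Finset V)
    (u : V → ℝ) : Prop :=
  (∀ x ∈ A, 0 < u x) ∧ ∀ x ∈ A, HAop G μ Vpot (↑A) u x = 1

open Classical in
/-- The Dirichlet restriction `H^A` as a matrix indexed by `A`. -/
noncomputable def HAmat (G : SimpleGraph V) (μ : V → V → ℝ) (Vpot : V → ℝ) (A : Finset V) :
    Matrix A A ℝ := fun x y =>
  (if (x : V) = (y : V) then ndeg G (x : V) + Vpot (x : V) else 0) -
    (if G.Adj (x : V) (y : V) then μ (x : V) (y : V) else 0)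

open Classical in
/-- The integrated density of states: number of eigenvalues `≤ E` (with multiplicity),
divided by `|A|`. -/
noncomputable def NA {A : Finset V} {M : Matrix A A ℝ} (hM : M.IsHermitian) (E : ℝ) : ℝ :=
  ((Finset.univ.filter fun i => hM.eigenvalues i ≤ E).card : ℝ) / (A.card : ℝ)

/-- `Z` is the set of centers of a covering of `𝕍` by balls of radius `R`
with finite overlap constant `b`. -/
def IsCover (G : SimpleGraph V) (Z : Set V) (R b : ℝ) : Prop :=
  (∀ y : V, ∃ z ∈ Z, y ∈ gball G z R) ∧
    ∀ y : V, (({z ∈ Z | y ∈ gball G z R}).ncard : ℝ) ≤ b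

/-- The landscape counting function `N_u^{𝒫,A}(E)` for the cover with centers `Z` and radius `R`:
the number of balls `B` of the cover with `min_{x ∈ B∩A} 1/u(x) ≤ E`, divided by `|A|`. -/
noncomputable def Nu (G : SimpleGraph V) (u : V → ℝ) (A : Finset V) (Z : Set V) (R E : ℝ) : ℝ :=
  (({z ∈ Z | ∃ x ∈ A, x ∈ gball G z R ∧ 1 / u x ≤ E}).ncard : ℝ) / (A.card : ℝ)

/-- The diameter of a finite set of vertices in the graph metric. -/
noncomputable def diamA (G : SimpleGraph V) (A : Finset V) : ℝ :=
  ((A.sup fun x => A.sup fun y => G.dist x y : ℕ) : ℝ)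

/-- `A` has sufficient overlap with balls, with constant `cA`. -/
def SuffOverlap (G : SimpleGraph V) (A : Finset V) (α cA : ℝ) : Prop :=
  ∀ x ∈ A, ∀ r : ℝ, 1 ≤ r → r ≤ 4 * diamA G A →
    cA * r ^ α ≤ (((↑A : Set V) ∩ gball G x r).ncard : ℝ)

/-- The Dirichlet Laplacian `-Δ^B` of a region `B`, acting on functions:
`(-Δ^B f)(x) = deg(x) f(x) - Σ_{y ∈ B, y ∼ x} f(y)`. -/
noncomputable def negDirLap (G : SimpleGraph V) (B : Set V) (f : V → ℝ) (x : V) : ℝ :=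
  ndeg G x * f x - ∑ᶠ y ∈ {y ∈ B | G.Adj x y}, f y

/-- Exterior (vertex) boundary of a set. -/
def extBoundary (G : SimpleGraph V) (S : Set V) : Set V :=
  {x | x ∉ S ∧ ∃ y ∈ S, G.Adj x y}

/-- Ball with respect to an abstract metric `d`. -/
def dball (d : V → V → ℝ) (ξ : V) (R : ℝ) : Set V := {y | d ξ y ≤ R}

/-- The harmonic weight assumption: a metric `d` strongly equivalent (constant `c`) to the
graph metric, together with harmonic weights `h ξ R : B^d(ξ,R) → [0,1]` satisfying the
submean property for subharmonic functions (with equality for harmonic ones), and a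
uniform lower bound `c' / |B^d(ξ,R)|` off `bad' sets `X ξ R` of asymptotically
negligible proportion. -/
structure HarmonicWeight (G : SimpleGraph V) (d : V → V → ℝ) (h : V → ℝ → V → ℝ)
    (X : V → ℝ → Set V) (c c' : ℝ) : Prop where
  c_one : 1 ≤ c
  c'_pos : 0 < c'
  d_self : ∀ x, d x x = 0
  d_eq_zero : ∀ x y, d x y = 0 → x = y
  d_symm : ∀ x y, d x y = d y x
  d_triangle : ∀ x y z, d x z ≤ d x y + d y z
  d_lower : ∀ x y, c⁻¹ * (G.dist x y : ℝ) ≤ d x y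
  d_upper : ∀ x y, d x y ≤ c * (G.dist x y : ℝ)
  h_mem : ∀ ξ (R : ℝ) y, y ∈ dball d ξ R → h ξ R y ∈ Set.Icc (0 : ℝ) 1
  submean : ∀ ξ (R : ℝ), 0 < R → ∀ f : V → ℝ,
    (∀ x ∈ dball d ξ R ∪ extBoundary G (dball d ξ R), 0 ≤ lap G f x) →
    f ξ ≤ ∑ᶠ y ∈ dball d ξ R, h ξ R y * f y
  harm_eq : ∀ ξ (R : ℝ), 0 < R → ∀ f : V → ℝ,
    (∀ x ∈ dball d ξ R ∪ extBoundary G (dball d ξ R), lap G f x = 0) →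
    f ξ = ∑ᶠ y ∈ dball d ξ R, h ξ R y * f y
  X_subset : ∀ ξ (R : ℝ), X ξ R ⊆ dball d ξ R
  h_lower : ∀ ξ (R : ℝ), ∀ y ∈ dball d ξ R \ X ξ R,
    c' / ((dball d ξ R).ncard : ℝ) ≤ h ξ R y
  X_small : ∀ ε : ℝ, 0 < ε → ∃ R₀ : ℝ, ∀ R : ℝ, R₀ ≤ R → ∀ ξ : V,
    ((X ξ R).ncard : ℝ) ≤ ε * ((dball d ξ R).ncard : ℝ)




section Aux
variable {G : SimpleGraph V} {α cL cU : ℝ}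

variable {G : SimpleGraph V} {α cL cU : ℝ}

lemma gball_mono {x : V} {r r' : ℝ} (h : r ≤ r') : gball G x r ⊆ gball G x r' :=
  fun y hy => ⟨hy.1, hy.2.trans h⟩

lemma self_mem_gball {x : V} {r : ℝ} (hr : 0 ≤ r) : x ∈ gball G x r := by
  refine ⟨SimpleGraph.Reachable.refl x, ?_⟩
  rw [SimpleGraph.dist_self]
  simpa using hr

lemma gball_finite (hcL : 0 < cL) (hvol : VolCtrl G α cL cU)
    (x : V) (r : ℝ) : (gball G x r).Finite := by
  have key : ∀ s : ℝ, 1 ≤ s → (gball G x s).Finite := by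
    intro s hs
    by_contra hinf
    have h0 : (gball G x s).ncard = 0 := (Set.Infinite.ncard hinf)
    have := (hvol x s hs).1
    rw [h0] at this
    have hp : 0 < cL * s ^ α := by positivity
    simpa using lt_of_lt_of_le hp this
  rcases le_total r 1 with h | h
  · exact (key 1 le_rfl).subset (gball_mono h)
  · exact key r h

lemma exists_adj (hconn : G.Connected) [Infinite V] (x : V) : ∃ y, G.Adj x y := by
  have : Nontrivial V := Infinite.instNontrivial V
  obtain ⟨y, hy⟩ := exists_ne x
  obtain ⟨w⟩ := hconn.preconnected x y
  cases w with
  | nil => exact absurd rfl (Ne.symm hy)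
  | cons h _ => exact ⟨_, h⟩

lemma adj_mem_gball {x y : V} (h : G.Adj x y) : y ∈ gball G x 1 := by
  refine ⟨h.reachable, ?_⟩
  rw [SimpleGraph.dist_eq_one_iff_adj.mpr h]
  norm_num

lemma neighborSet_finite (hcL : 0 < cL) (hvol : VolCtrl G α cL cU) (x : V) :
    (G.neighborSet x).Finite :=
  (gball_finite hcL hvol x 1).subset fun _ hy => adj_mem_gball hy

lemma one_le_ndeg (hconn : G.Connected) [Infinite V] (hcL : 0 < cL)
    (hvol : VolCtrl G α cL cU) (x : V) : 1 ≤ ndeg G x := by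
  obtain ⟨y, hy⟩ := exists_adj hconn x
  have hfin := neighborSet_finite hcL hvol x
  have : 0 < (G.neighborSet x).ncard := by
    rw [Set.ncard_pos hfin]
    exact ⟨y, hy⟩
  have : (1:ℕ) ≤ (G.neighborSet x).ncard := this
  rw [ndeg]
  exact_mod_cast this

lemma gball_card_le (hvol : VolCtrl G α cL cU) {x : V} {r : ℝ} (hr : 1 ≤ r)
    (hfin : (gball G x r).Finite) : (hfin.toFinset.card : ℝ) ≤ cU * r ^ α := by
  have := (hvol x r hr).2
  rwa [Set.ncard_eq_toFinset_card _ hfin] at this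

lemma le_gball_card (hvol : VolCtrl G α cL cU) {x : V} {r : ℝ} (hr : 1 ≤ r)
    (hfin : (gball G x r).Finite) : cL * r ^ α ≤ (hfin.toFinset.card : ℝ) := by
  have := (hvol x r hr).1
  rwa [Set.ncard_eq_toFinset_card _ hfin] at this

lemma ndeg_eq_card (hfin : (G.neighborSet x).Finite) :
    ndeg G x = (hfin.toFinset.card : ℝ) := by
  rw [ndeg, Set.ncard_eq_toFinset_card _ hfin]


variable {G : SimpleGraph V} {α cL cU : ℝ}

/-- A point belongs symmetrically to balls. -/
lemma mem_gball_comm {x y : V} {r : ℝ} : x ∈ gball G y r ↔ y ∈ gball G x r := by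
  constructor <;> intro h <;>
    exact ⟨h.1.symm, by rw [SimpleGraph.dist_comm]; exact h.2⟩

/-- Any finite family of centers of `r`-balls all containing within distance `lam*r` of `p`
has cardinality at most `b * cU * (lam+1)^α / cL`. -/
lemma center_count (hconn : G.Connected) (hα : 1 ≤ α) (hcL : 0 < cL) (hcU : 0 < cU)
    (hvol : VolCtrl G α cL cU) {Z : Set V} {r b lam : ℝ} (hr : 1 ≤ r) (hlam : 1 ≤ lam)
    (hb : 0 ≤ b) (hover : ∀ y : V, (({z ∈ Z | y ∈ gball G z r}).ncard : ℝ) ≤ b)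
    (p : V) (T : Finset V) (hTZ : ↑T ⊆ Z) (hTd : ∀ ζ ∈ T, p ∈ gball G ζ (lam * r)) :
    (T.card : ℝ) ≤ b * cU * (lam + 1) ^ α / cL := by
  classical
  have hrpos : (0:ℝ) < r := lt_of_lt_of_le zero_lt_one hr
  have hlr : (1:ℝ) ≤ (lam + 1) * r := by nlinarith
  set Bigfin := gball_finite hcL hvol p ((lam + 1) * r) with hBigfin
  set Bigf := Bigfin.toFinset with hBigf
  -- each small ball is inside the big ball
  have hsub : ∀ ζ ∈ T, ∀ y ∈ gball G ζ r, y ∈ gball G p ((lam + 1) * r) := by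
    intro ζ hζ y hy
    have hpζ := hTd ζ hζ
    refine ⟨(hpζ.1.symm).trans hy.1, ?_⟩
    have htri : (G.dist p y : ℝ) ≤ (G.dist p ζ : ℝ) + (G.dist ζ y : ℝ) := by
      exact_mod_cast hconn.dist_triangle (v := ζ)
    have h1 : (G.dist p ζ : ℝ) ≤ lam * r := by
      rw [SimpleGraph.dist_comm]; exact hpζ.2
    calc (G.dist p y : ℝ) ≤ (G.dist p ζ : ℝ) + (G.dist ζ y : ℝ) := htri
      _ ≤ lam * r + r := add_le_add h1 hy.2
      _ = (lam + 1) * r := by ring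
  -- card of each small ball as a filter of the big ball
  have hcardeq : ∀ ζ ∈ T,
      (Bigf.filter (fun y => y ∈ gball G ζ r)).card
        = ((gball_finite hcL hvol ζ r).toFinset.card) := by
    intro ζ hζ
    congr 1
    ext y
    simp only [Finset.mem_filter, Set.Finite.mem_toFinset, hBigf]
    constructor
    · rintro ⟨-, h⟩; exact h
    · intro h; exact ⟨hsub ζ hζ y h, h⟩
  -- double counting
  have hdc : (∑ ζ ∈ T, ((Bigf.filter (fun y => y ∈ gball G ζ r)).card : ℝ))
      ≤ b * (Bigf.card : ℝ) := by
    have hswap : (∑ ζ ∈ T, ((Bigf.filter (fun y => y ∈ gball G ζ r)).card : ℝ))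
        = ∑ y ∈ Bigf, ((T.filter (fun ζ => y ∈ gball G ζ r)).card : ℝ) := by
      simp_rw [Finset.card_filter]
      push_cast
      rw [Finset.sum_comm]
    rw [hswap]
    have hyb : ∀ y ∈ Bigf, ((T.filter (fun ζ => y ∈ gball G ζ r)).card : ℝ) ≤ b := by
      intro y _
      have hsub2 : ↑(T.filter (fun ζ => y ∈ gball G ζ r)) ⊆ {z ∈ Z | y ∈ gball G z r} := by
        intro z hz
        simp only [Finset.coe_filter, Set.mem_setOf_eq] at hz
        exact ⟨hTZ hz.1, hz.2⟩
      have hfinset : ({z ∈ Z | y ∈ gball G z r}).Finite := by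
        refine (gball_finite hcL hvol y r).subset ?_
        intro z hz
        exact mem_gball_comm.mp hz.2
      have h1 : ((T.filter (fun ζ => y ∈ gball G ζ r)).card : ℕ)
          ≤ ({z ∈ Z | y ∈ gball G z r}).ncard := by
        rw [← Set.ncard_coe_finset]
        exact Set.ncard_le_ncard hsub2 hfinset
      calc ((T.filter (fun ζ => y ∈ gball G ζ r)).card : ℝ)
          ≤ (({z ∈ Z | y ∈ gball G z r}).ncard : ℝ) := by exact_mod_cast h1
        _ ≤ b := hover y
    calc (∑ y ∈ Bigf, ((T.filter (fun ζ => y ∈ gball G ζ r)).card : ℝ))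
        ≤ ∑ y ∈ Bigf, b := Finset.sum_le_sum hyb
      _ = (Bigf.card : ℝ) * b := by rw [Finset.sum_const, nsmul_eq_mul]
      _ = b * (Bigf.card : ℝ) := mul_comm _ _
  -- lower bound each small ball
  have hlow : (T.card : ℝ) * (cL * r ^ α)
      ≤ ∑ ζ ∈ T, ((Bigf.filter (fun y => y ∈ gball G ζ r)).card : ℝ) := by
    have : (T.card : ℝ) * (cL * r ^ α) = ∑ _ζ ∈ T, (cL * r ^ α) := by
      rw [Finset.sum_const, nsmul_eq_mul]
    rw [this]
    refine Finset.sum_le_sum fun ζ hζ => ?_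
    rw [hcardeq ζ hζ]
    have := (hvol ζ r hr).1
    rwa [Set.ncard_eq_toFinset_card _ (gball_finite hcL hvol ζ r)] at this
  -- upper bound the big ball
  have hbig : (Bigf.card : ℝ) ≤ cU * ((lam + 1) ^ α * r ^ α) := by
    have := (hvol p ((lam + 1) * r) hlr).2
    rw [Set.ncard_eq_toFinset_card _ Bigfin] at this
    rwa [Real.mul_rpow (by linarith) (le_of_lt hrpos)] at this
  have hchain : (T.card : ℝ) * (cL * r ^ α) ≤ b * cU * (lam + 1) ^ α * r ^ α := by
    calc (T.card : ℝ) * (cL * r ^ α) ≤ b * (Bigf.card : ℝ) := le_trans (hlow.trans hdc) le_rfl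
      _ ≤ b * (cU * ((lam + 1) ^ α * r ^ α)) := by
          exact mul_le_mul_of_nonneg_left hbig hb
      _ = b * cU * (lam + 1) ^ α * r ^ α := by ring
  have hrα : (0:ℝ) < r ^ α := Real.rpow_pos_of_pos hrpos α
  rw [le_div_iff₀ hcL]
  nlinarith [hrα]


end Aux


lemma sum_apply_pilp {n : Type*} [Fintype n] {κ : Type*} (t : Finset κ)
    (g : κ → EuclideanSpace ℝ n) (x : n) :
    (∑ i ∈ t, g i) x = ∑ i ∈ t, g i x := by
  classical
  induction t using Finset.induction with
  | empty => rfl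
  | insert _ _ h ih => rw [Finset.sum_insert h, Finset.sum_insert h, ← ih]; rfl

open Matrix in
lemma spectral_count {n : Type*} [Fintype n] [DecidableEq n] {M : Matrix n n ℝ}
    (hM : M.IsHermitian) (E : ℝ) {ι : Type*} [Fintype ι]
    (Φ : (EuclideanSpace ℝ n) →ₗ[ℝ] (ι → ℝ))
    (hform : ∀ f : EuclideanSpace ℝ n, Φ f = 0 → f ≠ 0 →
      E * ∑ x, f x ^ 2 < ∑ x, f x * M.mulVec f x) :
    ((Finset.univ.filter fun i => hM.eigenvalues i ≤ E).card) ≤ Fintype.card ι := by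
  classical
  set v : n → EuclideanSpace ℝ n := fun i => hM.eigenvectorBasis i with hv
  have hortho := hM.eigenvectorBasis.orthonormal
  rw [orthonormal_iff_ite] at hortho
  have hdp : ∀ i j, (∑ x, v i x * v j x) = if i = j then (1:ℝ) else 0 := by
    intro i j
    have h := hortho i j
    simpa [PiLp.inner_apply, RCLike.inner_apply, mul_comm] using h
  have heig : ∀ j x, M.mulVec (v j) x = hM.eigenvalues j * v j x := by
    intro j x
    have h := congrFun (hM.mulVec_eigenvectorBasis j) x
    simpa [Pi.smul_apply, smul_eq_mul] using h
  set S : Finset n := Finset.univ.filter fun i => hM.eigenvalues i ≤ E with hS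
  set Ψ : ((↥S) → ℝ) →ₗ[ℝ] (ι → ℝ) :=
    Φ ∘ₗ (Fintype.linearCombination ℝ (fun i : ↥S => v ↑i)) with hΨ
  have hinj : Function.Injective Ψ := by
    rw [← LinearMap.ker_eq_bot, LinearMap.ker_eq_bot']
    intro c hc
    by_contra hcne
    set f : EuclideanSpace ℝ n := ∑ i : ↥S, c i • v (↑i) with hf
    have hΦf : Φ f = 0 := by
      have : Ψ c = Φ f := by
        rw [hΨ]
        simp [Fintype.linearCombination_apply, hf]
      rw [← this]; exact hc
    have hfx : ∀ x, f x = ∑ i : ↥S, c i * v (↑i) x := by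
      intro x
      rw [hf, sum_apply_pilp]
      exact Finset.sum_congr rfl fun i _ => rfl
    -- double sum identity
    have hsum2 : ∀ (w : ↥S → ℝ),
        (∑ x, f x * ∑ i : ↥S, w i * v (↑i) x) = ∑ i : ↥S, w i * c i := by
      intro w
      calc (∑ x, f x * ∑ i : ↥S, w i * v (↑i) x)
          = ∑ x, ∑ i : ↥S, ∑ j : ↥S, w i * c j * (v (↑j) x * v (↑i) x) := by
            refine Finset.sum_congr rfl fun x _ => ?_
            rw [hfx x, Finset.sum_mul_sum]
            rw [Finset.sum_comm]
            refine Finset.sum_congr rfl fun i _ => Finset.sum_congr rfl fun j _ => by ring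
        _ = ∑ i : ↥S, ∑ j : ↥S, w i * c j * ∑ x, v (↑j) x * v (↑i) x := by
            rw [Finset.sum_comm]
            refine Finset.sum_congr rfl fun i _ => ?_
            rw [Finset.sum_comm]
            refine Finset.sum_congr rfl fun j _ => ?_
            rw [← Finset.mul_sum]
        _ = ∑ i : ↥S, w i * c i := by
            refine Finset.sum_congr rfl fun i _ => ?_
            rw [Finset.sum_eq_single i]
            · rw [hdp]; simp
            · intro j _ hji
              rw [hdp]
              have : (↑j : n) ≠ ↑i := fun h => hji (Subtype.ext h)
              simp [this]
            · simp
    have hnorm : (∑ x, f x ^ 2) = ∑ i : ↥S, c i ^ 2 := by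
      have := hsum2 c
      simp_rw [← hfx] at this
      · simpa [pow_two] using this
    have hne : ∃ i : ↥S, c i ≠ 0 := by
      by_contra h
      push_neg at h
      exact hcne (funext fun i => h i)
    have hfne : f ≠ 0 := by
      intro h0
      obtain ⟨i, hi⟩ := hne
      have h1 : (∑ x, f x ^ 2) = 0 := by rw [h0]; simp
      have h2 : (0:ℝ) < ∑ i : ↥S, c i ^ 2 := by
        refine Finset.sum_pos' (fun j _ => sq_nonneg _) ⟨i, Finset.mem_univ i, ?_⟩
        positivity
      rw [hnorm] at h1; linarith
    have hMfx : ∀ x, M.mulVec f x = ∑ i : ↥S, (hM.eigenvalues ↑i * c i) * v (↑i) x := by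
      intro x
      have : M.mulVec f x = ∑ y, M x y * f y := rfl
      rw [this]
      calc (∑ y, M x y * f y) = ∑ y, ∑ i : ↥S, c i * (M x y * v (↑i) y) := by
            refine Finset.sum_congr rfl fun y _ => ?_
            rw [hfx y, Finset.mul_sum]
            exact Finset.sum_congr rfl fun i _ => by ring
        _ = ∑ i : ↥S, c i * ∑ y, M x y * v (↑i) y := by
            rw [Finset.sum_comm]
            exact Finset.sum_congr rfl fun i _ => by rw [Finset.mul_sum]
        _ = ∑ i : ↥S, (hM.eigenvalues ↑i * c i) * v (↑i) x := by
            refine Finset.sum_congr rfl fun i _ => ?_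
            have : (∑ y, M x y * v (↑i) y) = M.mulVec (v ↑i) x := rfl
            rw [this, heig]; ring
    have hform2 : (∑ x, f x * M.mulVec f x) = ∑ i : ↥S, hM.eigenvalues ↑i * c i ^ 2 := by
      have : (∑ x, f x * M.mulVec f x)
          = ∑ x, f x * ∑ i : ↥S, (hM.eigenvalues ↑i * c i) * v (↑i) x := by
        exact Finset.sum_congr rfl fun x _ => by rw [hMfx x]
      rw [this, hsum2 (fun i => hM.eigenvalues ↑i * c i)]
      exact Finset.sum_congr rfl fun i _ => by ring
    have hlt := hform f hΦf hfne
    rw [hnorm, hform2] at hlt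
    have hle : (∑ i : ↥S, hM.eigenvalues ↑i * c i ^ 2) ≤ E * ∑ i : ↥S, c i ^ 2 := by
      rw [Finset.mul_sum]
      refine Finset.sum_le_sum fun i _ => ?_
      have hiS : hM.eigenvalues ↑i ≤ E := (Finset.mem_filter.mp i.2).2
      exact mul_le_mul_of_nonneg_right hiS (sq_nonneg _)
    linarith
  have hfr := LinearMap.finrank_le_finrank_of_injective hinj
  simpa [Module.finrank_pi, Fintype.card_coe] using hfr



lemma sum_split3 {V : Type*} (A : Finset V) (f g h : V → ℝ) :
    (∑ x ∈ A, (f x + g x - h x)) = (∑ x ∈ A, f x) + (∑ x ∈ A, g x) - ∑ x ∈ A, h x := by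
  rw [Finset.sum_sub_distrib, Finset.sum_add_distrib]

lemma sum_sum_add {V : Type*} (A : Finset V) (B : V → Finset V) (f g : V → V → ℝ) :
    (∑ x ∈ A, ∑ y ∈ B x, (f x y + g x y))
      = (∑ x ∈ A, ∑ y ∈ B x, f x y) + ∑ x ∈ A, ∑ y ∈ B x, g x y := by
  simp [Finset.sum_add_distrib]

lemma sum_sum_two {V : Type*} (A : Finset V) (B : V → Finset V) (f : V → V → ℝ) :
    (∑ x ∈ A, ∑ y ∈ B x, 2 * f x y) = 2 * ∑ x ∈ A, ∑ y ∈ B x, f x y := by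
  simp [← Finset.mul_sum]

lemma prod_filter_sum {V : Type*} (s t : Finset V) (P : V → V → Prop)
    [DecidablePred fun pq : V × V => P pq.1 pq.2] [∀ x, DecidablePred fun y => P x y]
    (f : V → V → ℝ) :
    (∑ pq ∈ (s ×ˢ t).filter (fun pq => P pq.1 pq.2), f pq.1 pq.2)
      = ∑ x ∈ s, ∑ y ∈ t.filter (fun y => P x y), f x y := by
  rw [Finset.sum_filter, Finset.sum_product]
  exact Finset.sum_congr rfl fun x _ => (Finset.sum_filter _ _).symm

open Classical in
lemma sum_adj_swap {V : Type*} (G : SimpleGraph V) (A : Finset V) (g : V → V → ℝ) :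
    (∑ x ∈ A, ∑ y ∈ A.filter (fun y => G.Adj x y), g x y)
      = ∑ x ∈ A, ∑ y ∈ A.filter (fun y => G.Adj x y), g y x := by
  have h : ∀ gg : V → V → ℝ, (∑ x ∈ A, ∑ y ∈ A.filter (fun y => G.Adj x y), gg x y)
      = ∑ x ∈ A, ∑ y ∈ A, if G.Adj x y then gg x y else 0 :=
    fun gg => Finset.sum_congr rfl fun x _ => Finset.sum_filter _ _
  rw [h, h, Finset.sum_comm]
  refine Finset.sum_congr rfl fun x _ => Finset.sum_congr rfl fun y _ => ?_
  exact if_congr (G.adj_comm y x) rfl rfl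

open Classical in
lemma adj_filter_coe {V : Type*} (G : SimpleGraph V) (A : Finset V) (x : V) :
    {y ∈ (↑A : Set V) | G.Adj x y} = ↑(A.filter (fun y => G.Adj x y)) := by
  ext y; simp


lemma sum_filter_exchange {κ β : Type*} (W : Finset κ) (A : Finset β) (P : κ → β → Prop)
    [∀ z, DecidablePred fun x => P z x] [∀ x, DecidablePred fun z => P z x] (f : β → ℝ) :
    (∑ z ∈ W, ∑ x ∈ A.filter (fun x => P z x), f x)
      = ∑ x ∈ A, ((W.filter (fun z => P z x)).card : ℝ) * f x := by
  calc (∑ z ∈ W, ∑ x ∈ A.filter (fun x => P z x), f x)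
      = ∑ z ∈ W, ∑ x ∈ A, if P z x then f x else 0 :=
        Finset.sum_congr rfl fun z _ => Finset.sum_filter _ _
    _ = ∑ x ∈ A, ∑ z ∈ W, if P z x then f x else 0 := Finset.sum_comm
    _ = ∑ x ∈ A, ((W.filter (fun z => P z x)).card : ℝ) * f x := by
        refine Finset.sum_congr rfl fun x _ => ?_
        rw [← Finset.sum_filter, Finset.sum_const, nsmul_eq_mul]

open Classical in
lemma filter_center_card_le {V : Type*} {G : SimpleGraph V} {α cL cU : ℝ}
    (hcL : 0 < cL) (hvol : VolCtrl G α cL cU) {Z : Set V} {r b : ℝ}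
    (hover : ∀ y : V, (({z ∈ Z | y ∈ gball G z r}).ncard : ℝ) ≤ b)
    (x : V) (W : Finset V) (hWZ : ↑W ⊆ Z) :
    ((W.filter (fun z => x ∈ gball G z r)).card : ℝ) ≤ b := by
  classical
  have hsub2 : ↑(W.filter (fun z => x ∈ gball G z r)) ⊆ {z ∈ Z | x ∈ gball G z r} := by
    intro z hz
    simp only [Finset.coe_filter, Set.mem_setOf_eq] at hz
    exact ⟨hWZ hz.1, hz.2⟩
  have hfin : ({z ∈ Z | x ∈ gball G z r}).Finite :=
    (gball_finite hcL hvol x r).subset fun z hz => mem_gball_comm.mp hz.2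
  have h1 : (W.filter (fun z => x ∈ gball G z r)).card ≤ ({z ∈ Z | x ∈ gball G z r}).ncard := by
    rw [← Set.ncard_coe_finset]
    exact Set.ncard_le_ncard hsub2 hfin
  calc ((W.filter (fun z => x ∈ gball G z r)).card : ℝ)
      ≤ (({z ∈ Z | x ∈ gball G z r}).ncard : ℝ) := by exact_mod_cast h1
    _ ≤ b := hover x

set_option maxHeartbeats 1000000 in
open Classical in
lemma core_bound
    {V : Type*} [Infinite V]
    {G : SimpleGraph V} (hconn : G.Connected)
    {α cL cU CP lam b : ℝ}
    (hα : 1 ≤ α) (hcL : 0 < cL) (hcU : 0 < cU) (hCP : 0 < CP) (hlam : 1 ≤ lam) (hb : 1 ≤ b)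
    (hvol : VolCtrl G α cL cU) (hpi : WeakPI G CP lam)
    {C : ℝ} (hC : C = max 1 (2 * (4 * CP * (b * cU * (lam + 1) ^ α / cL) + b)))
    (A : Finset V) (μ : V → V → ℝ) (Vpot : V → ℝ)
    (hμ : BondWeights G μ) (hV : ∀ x, 0 ≤ Vpot x)
    (u : V → ℝ) (hu : IsLandscape G μ Vpot A u)
    (E : ℝ) (hE : 0 < E) (Z : Set V) (hZ : IsCover G Z ((C * E) ^ (-(1:ℝ)/2)) b)
    (F : V → ℝ) (hFsupp : ∀ y, y ∉ A → F y = 0)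
    (hFne : ∃ x ∈ A, F x ≠ 0)
    (hcon : ∀ z ∈ Z, (∃ x ∈ A, x ∈ gball G z ((C*E) ^ (-(1:ℝ)/2)) ∧ 1 / u x ≤ C * E) →
      (∑ x ∈ A.filter (fun x => x ∈ gball G z ((C*E) ^ (-(1:ℝ)/2))), F x * ndeg G x) = 0) :
    E * ∑ x ∈ A, F x ^ 2 <
      ∑ x ∈ A, F x * ((ndeg G x + Vpot x) * F x
        - ∑ y ∈ A.filter (fun y => G.Adj x y), μ x y * F y) := by
  classical
  obtain ⟨hcov, hover⟩ := hZ
  obtain ⟨hupos, huHA⟩ := hu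
  set r : ℝ := (C * E) ^ (-(1:ℝ)/2) with hrdef
  set bstar : ℝ := b * cU * (lam + 1) ^ α / cL with hbstar
  set K : ℝ := 4 * CP * bstar + b with hKdef
  have hb0 : (0:ℝ) < b := lt_of_lt_of_le zero_lt_one hb
  have hC1 : 1 ≤ C := by rw [hC]; exact le_max_left _ _
  have hCK : 2 * K ≤ C := by rw [hC, hKdef, hbstar]; exact le_max_right _ _
  have hbstar0 : (0:ℝ) < bstar := by rw [hbstar]; positivity
  have hK0 : (0:ℝ) < K := by rw [hKdef]; positivity
  have hC0 : (0:ℝ) < C := lt_of_lt_of_le zero_lt_one hC1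
  have hCE : 0 < C * E := mul_pos hC0 hE
  have hrpos : 0 < r := Real.rpow_pos_of_pos hCE _
  have hr2 : r ^ 2 = (C * E)⁻¹ := by
    rw [hrdef, ← Real.rpow_natCast ((C * E) ^ (-(1:ℝ)/2)) 2, ← Real.rpow_mul hCE.le]
    norm_num
    rw [Real.rpow_neg_one, mul_inv_rev]
  -- landscape equation in Finset form
  have hHu : ∀ x ∈ A, (ndeg G x + Vpot x) * u x
      - (∑ y ∈ A.filter (fun y => G.Adj x y), μ x y * u y) = 1 := by
    intro x hx
    have h := huHA x hx
    rw [HAop, adj_filter_coe G A x, finsum_mem_coe_finset] at h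
    linarith [h]
  -- positivity of u on A
  have hu0 : ∀ x ∈ A, u x ≠ 0 := fun x hx => (hupos x hx).ne'
  -- bond weight facts on A-adjacent pairs
  have hμsym : ∀ x, ∀ y ∈ A.filter (fun y => G.Adj x y), μ x y = μ y x := by
    intro x y hy
    exact (hμ x y (Finset.mem_filter.mp hy).2).1
  have hμ0 : ∀ x, ∀ y ∈ A.filter (fun y => G.Adj x y), 0 ≤ μ x y := by
    intro x y hy
    exact (hμ x y (Finset.mem_filter.mp hy).2).2.1
  have hμ1 : ∀ x, ∀ y ∈ A.filter (fun y => G.Adj x y), μ x y ≤ 1 := by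
    intro x y hy
    exact (hμ x y (Finset.mem_filter.mp hy).2).2.2
  -- abbreviate the quadratic form
  set Q : ℝ := ∑ x ∈ A, F x * ((ndeg G x + Vpot x) * F x
      - ∑ y ∈ A.filter (fun y => G.Adj x y), μ x y * F y) with hQdef
  -- Step B : ground state transform
  have hGS : (∑ x ∈ A, F x ^ 2 / u x) ≤ Q := by
    have h1 : (∑ x ∈ A, F x ^ 2 / u x)
        = ∑ x ∈ A, (F x ^ 2 / u x) * ((ndeg G x + Vpot x) * u x
            - ∑ y ∈ A.filter (fun y => G.Adj x y), μ x y * u y) := by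
      refine Finset.sum_congr rfl fun x hx => ?_
      rw [hHu x hx, mul_one]
    set S1 : ℝ := ∑ x ∈ A, ∑ y ∈ A.filter (fun y => G.Adj x y),
        μ x y * ((F x ^ 2 / u x) * u y - F x * F y) with hS1
    have hQS : Q - (∑ x ∈ A, F x ^ 2 / u x) = S1 := by
      rw [hQdef, h1, ← Finset.sum_sub_distrib, hS1]
      refine Finset.sum_congr rfl fun x hx => ?_
      have hux : u x ≠ 0 := hu0 x hx
      have hexp : (∑ y ∈ A.filter (fun y => G.Adj x y),
          μ x y * ((F x ^ 2 / u x) * u y - F x * F y))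
          = (F x ^ 2 / u x) * (∑ y ∈ A.filter (fun y => G.Adj x y), μ x y * u y)
            - F x * (∑ y ∈ A.filter (fun y => G.Adj x y), μ x y * F y) := by
        rw [Finset.mul_sum, Finset.mul_sum, ← Finset.sum_sub_distrib]
        exact Finset.sum_congr rfl fun y _ => by ring
      rw [hexp]
      field_simp
      ring
    have hsym : S1 = ∑ x ∈ A, ∑ y ∈ A.filter (fun y => G.Adj x y),
        μ x y * ((F y ^ 2 / u y) * u x - F y * F x) := by
      rw [hS1, sum_adj_swap G A (fun x y => μ x y * ((F x ^ 2 / u x) * u y - F x * F y))]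
      refine Finset.sum_congr rfl fun x hx => Finset.sum_congr rfl fun y hy => ?_
      rw [← hμsym x y hy]
    have h2S : 2 * S1 = ∑ x ∈ A, ∑ y ∈ A.filter (fun y => G.Adj x y),
        μ x y * ((F x * u y - F y * u x) ^ 2 / (u x * u y)) := by
      rw [two_mul]
      nth_rewrite 1 [hS1]
      nth_rewrite 1 [hsym]
      rw [← Finset.sum_add_distrib]
      refine Finset.sum_congr rfl fun x hx => ?_
      rw [← Finset.sum_add_distrib]
      refine Finset.sum_congr rfl fun y hy => ?_
      have hux : u x ≠ 0 := hu0 x hx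
      have huy : u y ≠ 0 := hu0 y (Finset.mem_filter.mp hy).1
      field_simp
      ring
    have hS1nn : (0:ℝ) ≤ S1 := by
      have h2 : (0:ℝ) ≤ 2 * S1 := by
        rw [h2S]
        refine Finset.sum_nonneg fun x hx => Finset.sum_nonneg fun y hy => ?_
        have hux := hupos x hx
        have huy := hupos y ((Finset.mem_filter.mp hy).1)
        refine mul_nonneg (hμ0 x y hy) (div_nonneg (sq_nonneg _) ?_)
        positivity
      linarith
    linarith
  have hFu0 : (0:ℝ) ≤ ∑ x ∈ A, F x ^ 2 / u x :=
    Finset.sum_nonneg fun x hx => div_nonneg (sq_nonneg _) (hupos x hx).le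
  have hQ0 : (0:ℝ) ≤ Q := le_trans hFu0 hGS
  -- Step C : the energy comparison
  -- the neighborhood Finset
  have hNSfin : ((↑A : Set V) ∪ {y | ∃ a ∈ A, G.Adj a y}).Finite := by
    refine Set.Finite.union A.finite_toSet ?_
    refine Set.Finite.subset (Set.Finite.biUnion A.finite_toSet
      (fun a _ => neighborSet_finite hcL hvol a)) ?_
    rintro y ⟨a, ha, hay⟩
    exact Set.mem_biUnion ha hay
  set T : Finset V := hNSfin.toFinset with hT
  have hAT : A ⊆ T := by
    intro x hx
    rw [hT, Set.Finite.mem_toFinset]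
    exact Or.inl hx
  set D : Finset (V × V) :=
    (T ×ˢ T).filter (fun pq => G.Adj pq.1 pq.2 ∧ (pq.1 ∈ A ∨ pq.2 ∈ A)) with hD
  have hEA : (∑ pq ∈ D, (F pq.1 - F pq.2) ^ 2) ≤ 4 * Q := by
    set nF : ℝ := ∑ x ∈ A, ndeg G x * F x ^ 2 with hnF
    set vF : ℝ := ∑ x ∈ A, Vpot x * F x ^ 2 with hvF
    set dF : ℝ := ∑ x ∈ A, ((A.filter (fun y => G.Adj x y)).card : ℝ) * F x ^ 2 with hdF
    set sF : ℝ := ∑ x ∈ A, (∑ y ∈ A.filter (fun y => G.Adj x y), μ x y) * F x ^ 2 with hsF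
    set m : ℝ := ∑ x ∈ A, ∑ y ∈ A.filter (fun y => G.Adj x y), μ x y * (F x * F y) with hm
    set P2 : ℝ := ∑ x ∈ A, ∑ y ∈ A.filter (fun y => G.Adj x y), μ x y * (F x - F y) ^ 2
      with hP2
    -- swap helper specialized to weights symmetric in μ
    have hswapg : ∀ g : V → ℝ,
        (∑ x ∈ A, ∑ y ∈ A.filter (fun y => G.Adj x y), (1 - μ x y) * g y)
          = ∑ x ∈ A, ∑ y ∈ A.filter (fun y => G.Adj x y), (1 - μ x y) * g x := by
      intro g
      rw [sum_adj_swap G A (fun x y => (1 - μ x y) * g y)]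
      exact Finset.sum_congr rfl fun x _ => Finset.sum_congr rfl fun y hy => by
        rw [← hμsym x y hy]
    have hswapμ2 : (∑ x ∈ A, ∑ y ∈ A.filter (fun y => G.Adj x y), μ x y * F y ^ 2)
        = ∑ x ∈ A, ∑ y ∈ A.filter (fun y => G.Adj x y), μ x y * F x ^ 2 := by
      rw [sum_adj_swap G A (fun x y => μ x y * F y ^ 2)]
      exact Finset.sum_congr rfl fun x _ => Finset.sum_congr rfl fun y hy => by
        rw [← hμsym x y hy]
    have hX1 : (∑ x ∈ A, ∑ y ∈ A.filter (fun y => G.Adj x y), μ x y * F x ^ 2) = sF := by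
      rw [hsF]
      exact Finset.sum_congr rfl fun x _ => (Finset.sum_mul _ _ _).symm
    -- identity for Q
    have hQm : Q = nF + vF - m := by
      rw [hQdef]
      have hterm : ∀ x ∈ A, F x * ((ndeg G x + Vpot x) * F x
          - ∑ y ∈ A.filter (fun y => G.Adj x y), μ x y * F y)
          = ndeg G x * F x ^ 2 + Vpot x * F x ^ 2
            - ∑ y ∈ A.filter (fun y => G.Adj x y), μ x y * (F x * F y) := by
        intro x _
        have h1 : F x * (∑ y ∈ A.filter (fun y => G.Adj x y), μ x y * F y)
            = ∑ y ∈ A.filter (fun y => G.Adj x y), μ x y * (F x * F y) := by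
          rw [Finset.mul_sum]
          exact Finset.sum_congr rfl fun y _ => by ring
        rw [← h1]
        ring
      rw [Finset.sum_congr rfl hterm, sum_split3, hnF, hvF, hm]
    -- identity for P2
    have hP2m : P2 = 2 * sF - 2 * m := by
      rw [hP2]
      have hterm : ∀ x ∈ A, ∀ y ∈ A.filter (fun y => G.Adj x y),
          μ x y * (F x - F y) ^ 2
            = (μ x y * F x ^ 2 + μ x y * F y ^ 2) - 2 * (μ x y * (F x * F y)) :=
        fun x _ y _ => by ring
      calc (∑ x ∈ A, ∑ y ∈ A.filter (fun y => G.Adj x y), μ x y * (F x - F y) ^ 2)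
          = ∑ x ∈ A, ∑ y ∈ A.filter (fun y => G.Adj x y),
              ((μ x y * F x ^ 2 + μ x y * F y ^ 2) - 2 * (μ x y * (F x * F y))) :=
            Finset.sum_congr rfl fun x hx => Finset.sum_congr rfl fun y hy => hterm x hx y hy
        _ = ((∑ x ∈ A, ∑ y ∈ A.filter (fun y => G.Adj x y), μ x y * F x ^ 2)
              + ∑ x ∈ A, ∑ y ∈ A.filter (fun y => G.Adj x y), μ x y * F y ^ 2)
            - 2 * m := by
            rw [hm, ← sum_sum_two A _ (fun x y => μ x y * (F x * F y))]
            have := sum_split3 A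
              (fun x => ∑ y ∈ A.filter (fun y => G.Adj x y), μ x y * F x ^ 2)
              (fun x => ∑ y ∈ A.filter (fun y => G.Adj x y), μ x y * F y ^ 2)
              (fun x => ∑ y ∈ A.filter (fun y => G.Adj x y), 2 * (μ x y * (F x * F y)))
            rw [← this]
            refine Finset.sum_congr rfl fun x _ => ?_
            rw [← Finset.sum_add_distrib, ← Finset.sum_sub_distrib]
        _ = 2 * sF - 2 * m := by rw [hswapμ2, hX1]; ring
    -- nonnegativity and comparisons
    have hP2nn : (0:ℝ) ≤ P2 := by
      rw [hP2]
      exact Finset.sum_nonneg fun x hx => Finset.sum_nonneg fun y hy =>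
        mul_nonneg (hμ0 x y hy) (sq_nonneg _)
    have hvF0 : (0:ℝ) ≤ vF := by
      rw [hvF]
      exact Finset.sum_nonneg fun x _ => mul_nonneg (hV x) (sq_nonneg _)
    have hdin : ∀ x, ((A.filter (fun y => G.Adj x y)).card : ℝ) ≤ ndeg G x := by
      intro x
      rw [ndeg_eq_card (neighborSet_finite hcL hvol x)]
      have hsub : A.filter (fun y => G.Adj x y) ⊆ (neighborSet_finite hcL hvol x).toFinset := by
        intro y hy
        rw [Set.Finite.mem_toFinset]
        exact (Finset.mem_filter.mp hy).2
      exact_mod_cast Finset.card_le_card hsub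
    have hdFnF : dF ≤ nF := by
      rw [hdF, hnF]
      exact Finset.sum_le_sum fun x _ => mul_le_mul_of_nonneg_right (hdin x) (sq_nonneg _)
    -- partition of D
    have hDsplit := Finset.sum_filter_add_sum_filter_not D (fun pq => pq.1 ∈ A ∧ pq.2 ∈ A)
      (fun pq => (F pq.1 - F pq.2) ^ 2)
    -- the interior part
    have hDAAeq : D.filter (fun pq => pq.1 ∈ A ∧ pq.2 ∈ A)
        = (A ×ˢ A).filter (fun pq => G.Adj pq.1 pq.2) := by
      ext pq
      simp only [hD, Finset.mem_filter, Finset.mem_product]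
      constructor
      · rintro ⟨⟨-, hadj, -⟩, h1, h2⟩; exact ⟨⟨h1, h2⟩, hadj⟩
      · rintro ⟨⟨h1, h2⟩, hadj⟩
        exact ⟨⟨⟨hAT h1, hAT h2⟩, hadj, Or.inl h1⟩, h1, h2⟩
    have hDAAle : (∑ pq ∈ D.filter (fun pq => pq.1 ∈ A ∧ pq.2 ∈ A), (F pq.1 - F pq.2) ^ 2)
        ≤ P2 + 4 * (dF - sF) := by
      rw [hDAAeq, prod_filter_sum A A (fun x y => G.Adj x y) (fun x y => (F x - F y) ^ 2)]
      have hXdf : (∑ x ∈ A, ∑ y ∈ A.filter (fun y => G.Adj x y), (1 - μ x y) * F x ^ 2)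
          = dF - sF := by
        rw [hdF, hsF, ← Finset.sum_sub_distrib]
        refine Finset.sum_congr rfl fun x _ => ?_
        rw [← Finset.sum_mul, Finset.sum_sub_distrib, Finset.sum_const, nsmul_eq_mul,
          mul_one, sub_mul]
      calc (∑ x ∈ A, ∑ y ∈ A.filter (fun y => G.Adj x y), (F x - F y) ^ 2)
          ≤ ∑ x ∈ A, ∑ y ∈ A.filter (fun y => G.Adj x y),
              (μ x y * (F x - F y) ^ 2
                + (2 * ((1 - μ x y) * F x ^ 2) + 2 * ((1 - μ x y) * F y ^ 2))) := by
            refine Finset.sum_le_sum fun x hx => Finset.sum_le_sum fun y hy => ?_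
            nlinarith [mul_nonneg (sub_nonneg.mpr (hμ1 x y hy)) (sq_nonneg (F x + F y))]
        _ = P2 + (2 * (∑ x ∈ A, ∑ y ∈ A.filter (fun y => G.Adj x y), (1 - μ x y) * F x ^ 2)
              + 2 * ∑ x ∈ A, ∑ y ∈ A.filter (fun y => G.Adj x y), (1 - μ x y) * F y ^ 2) := by
            rw [sum_sum_add A _ (fun x y => μ x y * (F x - F y) ^ 2)
              (fun x y => 2 * ((1 - μ x y) * F x ^ 2) + 2 * ((1 - μ x y) * F y ^ 2)),
              sum_sum_add A _ (fun x y => 2 * ((1 - μ x y) * F x ^ 2))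
              (fun x y => 2 * ((1 - μ x y) * F y ^ 2)),
              sum_sum_two A _ (fun x y => (1 - μ x y) * F x ^ 2),
              sum_sum_two A _ (fun x y => (1 - μ x y) * F y ^ 2), hP2]
        _ = P2 + 4 * (dF - sF) := by
            rw [hswapg (fun y => F y ^ 2), hXdf]
            ring
    -- the boundary part
    have hbd : (∑ pq ∈ D.filter (fun pq => ¬(pq.1 ∈ A ∧ pq.2 ∈ A)), (F pq.1 - F pq.2) ^ 2)
        = 2 * (nF - dF) := by
      set Dnot := D.filter (fun pq => ¬(pq.1 ∈ A ∧ pq.2 ∈ A)) with hDnot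
      have hsplit2 := Finset.sum_filter_add_sum_filter_not Dnot (fun pq => pq.1 ∈ A)
        (fun pq => (F pq.1 - F pq.2) ^ 2)
      have hE1eq : Dnot.filter (fun pq => pq.1 ∈ A)
          = (A ×ˢ T).filter (fun pq => G.Adj pq.1 pq.2 ∧ pq.2 ∉ A) := by
        ext pq
        simp only [hDnot, hD, Finset.mem_filter, Finset.mem_product]
        constructor
        · rintro ⟨⟨⟨⟨-, h2T⟩, hadj, -⟩, hnot⟩, h1⟩
          exact ⟨⟨h1, h2T⟩, hadj, fun h2 => hnot ⟨h1, h2⟩⟩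
        · rintro ⟨⟨h1, h2T⟩, hadj, h2n⟩
          exact ⟨⟨⟨⟨hAT h1, h2T⟩, hadj, Or.inl h1⟩, fun hc => h2n hc.2⟩, h1⟩
      have hE1sum : (∑ pq ∈ Dnot.filter (fun pq => pq.1 ∈ A), (F pq.1 - F pq.2) ^ 2)
          = nF - dF := by
        rw [hE1eq, prod_filter_sum A T (fun x y => G.Adj x y ∧ y ∉ A)
          (fun x y => (F x - F y) ^ 2), hnF, hdF, ← Finset.sum_sub_distrib]
        refine Finset.sum_congr rfl fun x hx => ?_
        have hyz : ∀ y ∈ T.filter (fun y => G.Adj x y ∧ y ∉ A), (F x - F y) ^ 2 = F x ^ 2 := by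
          intro y hy
          rw [hFsupp y (Finset.mem_filter.mp hy).2.2, sub_zero]
        rw [Finset.sum_congr rfl hyz, Finset.sum_const, nsmul_eq_mul]
        have hsubAN : A.filter (fun y => G.Adj x y) ⊆ (neighborSet_finite hcL hvol x).toFinset := by
          intro y hy
          rw [Set.Finite.mem_toFinset]
          exact (Finset.mem_filter.mp hy).2
        have hset : T.filter (fun y => G.Adj x y ∧ y ∉ A)
            = (neighborSet_finite hcL hvol x).toFinset \ A.filter (fun y => G.Adj x y) := by
          ext y
          simp only [Finset.mem_filter, Finset.mem_sdiff, Set.Finite.mem_toFinset, hT,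
            SimpleGraph.mem_neighborSet]
          constructor
          · rintro ⟨-, hadj, hyA⟩
            exact ⟨hadj, fun hc => hyA hc.1⟩
          · rintro ⟨hadj, hyAN⟩
            have hyA : y ∉ A := fun hyA => hyAN ⟨hyA, hadj⟩
            refine ⟨Or.inr ⟨x, hx, hadj⟩, hadj, hyA⟩
        rw [hset, Finset.card_sdiff_of_subset hsubAN,
          Nat.cast_sub (Finset.card_le_card hsubAN),
          ndeg_eq_card (neighborSet_finite hcL hvol x), sub_mul]
      have hmemswap : ∀ pq : V × V, pq ∈ Dnot.filter (fun pq => ¬(pq.1 ∈ A)) →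
          pq.swap ∈ Dnot.filter (fun pq => pq.1 ∈ A) := by
        intro pq hpq
        rw [Finset.mem_filter, hDnot, Finset.mem_filter, hD, Finset.mem_filter,
          Finset.mem_product] at hpq ⊢
        obtain ⟨⟨⟨⟨h1T, h2T⟩, hadj, hor⟩, hnb⟩, h1n⟩ := hpq
        have h2A : pq.2 ∈ A := by
          rcases hor with h | h
          · exact absurd h h1n
          · exact h
        exact ⟨⟨⟨⟨h2T, h1T⟩, hadj.symm, Or.inl h2A⟩, fun hc => h1n hc.2⟩, h2A⟩
      have hmemswap' : ∀ pq : V × V, pq ∈ Dnot.filter (fun pq => pq.1 ∈ A) →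
          pq.swap ∈ Dnot.filter (fun pq => ¬(pq.1 ∈ A)) := by
        intro pq hpq
        rw [Finset.mem_filter, hDnot, Finset.mem_filter, hD, Finset.mem_filter,
          Finset.mem_product] at hpq ⊢
        obtain ⟨⟨⟨⟨h1T, h2T⟩, hadj, hor⟩, hnb⟩, h1A⟩ := hpq
        have h2n : pq.2 ∉ A := fun hc => hnb ⟨h1A, hc⟩
        exact ⟨⟨⟨⟨h2T, h1T⟩, hadj.symm, Or.inr h1A⟩, fun hc => h2n hc.1⟩, h2n⟩
      have hE2sum : (∑ pq ∈ Dnot.filter (fun pq => ¬(pq.1 ∈ A)), (F pq.1 - F pq.2) ^ 2)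
          = ∑ pq ∈ Dnot.filter (fun pq => pq.1 ∈ A), (F pq.1 - F pq.2) ^ 2 := by
        refine Finset.sum_nbij' Prod.swap Prod.swap hmemswap hmemswap'
          (fun a _ => rfl) (fun a _ => rfl) (fun a _ => ?_)
        rw [Prod.fst_swap, Prod.snd_swap]
        ring
      have : (∑ pq ∈ Dnot, (F pq.1 - F pq.2) ^ 2)
          = 2 * (nF - dF) := by
        rw [← hsplit2, hE1sum, hE2sum, hE1sum]
        ring
      exact this
    -- combine
    have hcomb : (∑ pq ∈ D, (F pq.1 - F pq.2) ^ 2) ≤ P2 + 4 * (dF - sF) + 2 * (nF - dF) := by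
      rw [← hDsplit]
      have := hbd
      linarith [hDAAle]
    have h4Q : 4 * Q = 2 * P2 + 4 * nF + 4 * vF - 4 * sF := by
      rw [hQm, hP2m]
      ring
    linarith
  -- Step D : covering estimate
  have hcover : (∑ x ∈ A, F x ^ 2) ≤ K * (C * E)⁻¹ * Q := by
    have hZAfin : ({z ∈ Z | ∃ x ∈ A, x ∈ gball G z r}).Finite := by
      refine Set.Finite.subset (Set.Finite.biUnion A.finite_toSet
        (fun x _ => gball_finite hcL hvol x r)) ?_
      rintro z ⟨hzZ, x, hxA, hxb⟩
      exact Set.mem_biUnion hxA (mem_gball_comm.mp hxb)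
    have hGfin : ({z ∈ Z | ∃ x ∈ A, x ∈ gball G z r ∧ 1 / u x ≤ C * E}).Finite := by
      refine hZAfin.subset ?_
      rintro z ⟨hzZ, x, hxA, hxb, -⟩
      exact ⟨hzZ, x, hxA, hxb⟩
    set ZAf : Finset V := hZAfin.toFinset with hZAf
    set Gf : Finset V := hGfin.toFinset with hGfdef
    have hGZA : Gf ⊆ ZAf := by
      intro z hz
      rw [hGfdef, Set.Finite.mem_toFinset] at hz
      rw [hZAf, Set.Finite.mem_toFinset]
      obtain ⟨hzZ, x, hxA, hxb, -⟩ := hz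
      exact ⟨hzZ, x, hxA, hxb⟩
    have hZAfZ : ↑ZAf ⊆ Z := by
      intro z hz
      rw [hZAf] at hz
      rw [Set.Finite.coe_toFinset] at hz
      exact hz.1
    -- Step 1 : coverage
    have hstep1 : (∑ x ∈ A, F x ^ 2)
        ≤ ∑ z ∈ ZAf, ∑ x ∈ A.filter (fun x => x ∈ gball G z r), F x ^ 2 := by
      rw [sum_filter_exchange ZAf A (fun z x => x ∈ gball G z r) (fun x => F x ^ 2)]
      refine Finset.sum_le_sum fun x hx => ?_
      obtain ⟨z, hzZ, hxz⟩ := hcov x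
      have hzZA : z ∈ ZAf := by
        rw [hZAf, Set.Finite.mem_toFinset]
        exact ⟨hzZ, x, hx, hxz⟩
      have h1 : 1 ≤ (ZAf.filter (fun z => x ∈ gball G z r)).card :=
        Finset.card_pos.mpr ⟨z, Finset.mem_filter.mpr ⟨hzZA, hxz⟩⟩
      have h1' : (1:ℝ) ≤ ((ZAf.filter (fun z => x ∈ gball G z r)).card : ℝ) := by
        exact_mod_cast h1
      nlinarith [sq_nonneg (F x)]
    -- split off the good balls
    have hsplit := Finset.sum_sdiff (f := fun z =>
      ∑ x ∈ A.filter (fun x => x ∈ gball G z r), F x ^ 2) hGZA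
    -- Step 2 : bad balls
    have hbad : (∑ z ∈ ZAf \ Gf, ∑ x ∈ A.filter (fun x => x ∈ gball G z r), F x ^ 2)
        ≤ b * ((C * E)⁻¹ * Q) := by
      have hterm : ∀ z ∈ ZAf \ Gf, ∀ x ∈ A.filter (fun x => x ∈ gball G z r),
          F x ^ 2 ≤ F x ^ 2 / u x * (C * E)⁻¹ := by
        intro z hz x hx
        obtain ⟨hxA, hxb⟩ := Finset.mem_filter.mp hx
        have hzZA := Finset.mem_sdiff.mp hz
        have hzZ : z ∈ Z := hZAfZ hzZA.1
        have hnle : ¬(1 / u x ≤ C * E) := by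
          intro hle
          refine hzZA.2 ?_
          rw [hGfdef, Set.Finite.mem_toFinset]
          exact ⟨hzZ, x, hxA, hxb, hle⟩
        push_neg at hnle
        have hux := hupos x hxA
        have h2 : F x ^ 2 * (C * E) ≤ F x ^ 2 * (1 / u x) :=
          mul_le_mul_of_nonneg_left hnle.le (sq_nonneg _)
        calc F x ^ 2 = (F x ^ 2 * (C * E)) * (C * E)⁻¹ := by
              field_simp
          _ ≤ (F x ^ 2 * (1 / u x)) * (C * E)⁻¹ :=
              mul_le_mul_of_nonneg_right h2 (inv_nonneg.mpr hCE.le)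
          _ = F x ^ 2 / u x * (C * E)⁻¹ := by
              rw [mul_one_div]
      have hnn : ∀ x ∈ A, 0 ≤ F x ^ 2 / u x * (C * E)⁻¹ := fun x hx =>
        mul_nonneg (div_nonneg (sq_nonneg _) (hupos x hx).le) (inv_nonneg.mpr hCE.le)
      calc (∑ z ∈ ZAf \ Gf, ∑ x ∈ A.filter (fun x => x ∈ gball G z r), F x ^ 2)
          ≤ ∑ z ∈ ZAf \ Gf, ∑ x ∈ A.filter (fun x => x ∈ gball G z r),
              F x ^ 2 / u x * (C * E)⁻¹ :=
            Finset.sum_le_sum fun z hz => Finset.sum_le_sum fun x hx => hterm z hz x hx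
        _ ≤ ∑ z ∈ ZAf, ∑ x ∈ A.filter (fun x => x ∈ gball G z r),
              F x ^ 2 / u x * (C * E)⁻¹ := by
            refine Finset.sum_le_sum_of_subset_of_nonneg (Finset.sdiff_subset) ?_
            intro z hz _
            exact Finset.sum_nonneg fun x hx => hnn x (Finset.mem_filter.mp hx).1
        _ = ∑ x ∈ A, ((ZAf.filter (fun z => x ∈ gball G z r)).card : ℝ)
              * (F x ^ 2 / u x * (C * E)⁻¹) :=
            sum_filter_exchange ZAf A (fun z x => x ∈ gball G z r) _
        _ ≤ ∑ x ∈ A, b * (F x ^ 2 / u x * (C * E)⁻¹) :=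
            Finset.sum_le_sum fun x hx => mul_le_mul_of_nonneg_right
              (filter_center_card_le hcL hvol hover x ZAf hZAfZ) (hnn x hx)
        _ = b * ((C * E)⁻¹ * ∑ x ∈ A, F x ^ 2 / u x) := by
            rw [← Finset.mul_sum, ← Finset.sum_mul]
            ring
        _ ≤ b * ((C * E)⁻¹ * Q) :=
            mul_le_mul_of_nonneg_left
              (mul_le_mul_of_nonneg_left hGS (inv_nonneg.mpr hCE.le)) hb0.le
    -- Step 3 : good balls
    have hgood : (∑ z ∈ Gf, ∑ x ∈ A.filter (fun x => x ∈ gball G z r), F x ^ 2)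
        ≤ 4 * CP * bstar * ((C * E)⁻¹ * Q) := by
      have hGfZ : ↑Gf ⊆ Z := by
        intro z hz
        rw [hGfdef, Set.Finite.coe_toFinset] at hz
        exact hz.1
      rcases le_or_gt 1 r with hr1 | hr1
      · -- r ≥ 1 : use the Poincaré inequality
        have hball : ∀ z ∈ Gf, (∑ x ∈ A.filter (fun x => x ∈ gball G z r), F x ^ 2)
            ≤ CP * r ^ 2 * pairEnergy G (gball G z (lam * r)) F := by
          intro z hz
          rw [hGfdef, Set.Finite.mem_toFinset] at hz
          obtain ⟨hzZ, hex⟩ := hz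
          have hnum := hcon z hzZ hex
          set Bfin := gball_finite hcL hvol z r with hBfin
          have hcoe : gball G z r = ↑Bfin.toFinset := (Set.Finite.coe_toFinset _).symm
          have hfeq : Bfin.toFinset.filter (fun y => y ∈ A)
              = A.filter (fun x => x ∈ gball G z r) := by
            ext y
            simp only [Finset.mem_filter, Set.Finite.mem_toFinset]
            exact and_comm
          have hwavg : wavg G (gball G z r) F = 0 := by
            rw [wavg]
            have h0 : ∀ y ∈ Bfin.toFinset, F y * ndeg G y ≠ 0 → y ∈ A := by
              intro y _ hne
              by_contra hyA
              rw [hFsupp y hyA, zero_mul] at hne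
              exact hne rfl
            have hnum2 : (∑ᶠ y ∈ gball G z r, F y * ndeg G y) = 0 := by
              rw [hcoe, finsum_mem_coe_finset, ← Finset.sum_filter_of_ne h0, hfeq]
              exact hnum
            rw [hnum2, zero_div]
          have hPI := hpi z r hr1 F
          rw [hwavg] at hPI
          simp only [sub_zero] at hPI
          have hsq : (∑ᶠ y ∈ gball G z r, F y ^ 2) = ∑ y ∈ Bfin.toFinset, F y ^ 2 := by
            conv_lhs => rw [hcoe]
            rw [finsum_mem_coe_finset]
          rw [hsq] at hPI
          refine le_trans ?_ hPI
          rw [← hfeq]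
          exact Finset.sum_le_sum_of_subset_of_nonneg (Finset.filter_subset _ _)
            (fun y _ _ => sq_nonneg _)
        have hsum1 : (∑ z ∈ Gf, ∑ x ∈ A.filter (fun x => x ∈ gball G z r), F x ^ 2)
            ≤ CP * r ^ 2 * ∑ z ∈ Gf, pairEnergy G (gball G z (lam * r)) F := by
          rw [Finset.mul_sum]
          exact Finset.sum_le_sum hball
        have hpe : ∀ z ∈ Gf, pairEnergy G (gball G z (lam * r)) F
            ≤ ∑ pq ∈ D.filter (fun pq => pq.1 ∈ gball G z (lam * r)),
                (F pq.1 - F pq.2) ^ 2 := by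
          intro z hz
          set B'fin := gball_finite hcL hvol z (lam * r) with hB'
          set B'f := B'fin.toFinset with hB'f
          have hcoe' : gball G z (lam * r) = ↑B'f := (Set.Finite.coe_toFinset _).symm
          have h1 : pairEnergy G (gball G z (lam * r)) F
              = ∑ p ∈ B'f, ∑ q ∈ B'f.filter (fun q => G.Adj p q), (F p - F q) ^ 2 := by
            rw [pairEnergy, hcoe', finsum_mem_coe_finset]
            refine Finset.sum_congr rfl fun p _ => ?_
            rw [adj_filter_coe G B'f p, finsum_mem_coe_finset]
          rw [h1,
            ← prod_filter_sum B'f B'f (fun x y => G.Adj x y) (fun x y => (F x - F y) ^ 2)]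
          have h0 : ∀ pq ∈ (B'f ×ˢ B'f).filter (fun pq => G.Adj pq.1 pq.2),
              (F pq.1 - F pq.2) ^ 2 ≠ 0 → (pq.1 ∈ A ∨ pq.2 ∈ A) := by
            intro pq _ hne
            by_contra hno
            push_neg at hno
            rw [hFsupp pq.1 hno.1, hFsupp pq.2 hno.2] at hne
            simp at hne
          rw [← Finset.sum_filter_of_ne h0]
          refine Finset.sum_le_sum_of_subset_of_nonneg ?_ (fun pq _ _ => sq_nonneg _)
          intro pq hpq
          rw [Finset.mem_filter, Finset.mem_filter, Finset.mem_product] at hpq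
          obtain ⟨⟨⟨h1B, h2B⟩, hadj⟩, hor⟩ := hpq
          rw [Finset.mem_filter, hD, Finset.mem_filter, Finset.mem_product]
          have h1T : pq.1 ∈ T := by
            rcases hor with h | h
            · exact hAT h
            · rw [hT, Set.Finite.mem_toFinset]
              exact Or.inr ⟨pq.2, h, hadj.symm⟩
          have h2T : pq.2 ∈ T := by
            rcases hor with h | h
            · rw [hT, Set.Finite.mem_toFinset]
              exact Or.inr ⟨pq.1, h, hadj⟩
            · exact hAT h
          refine ⟨⟨⟨h1T, h2T⟩, hadj, hor⟩, ?_⟩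
          rw [hcoe']
          exact h1B
        have hexch : (∑ z ∈ Gf, ∑ pq ∈ D.filter (fun pq => pq.1 ∈ gball G z (lam * r)),
              (F pq.1 - F pq.2) ^ 2)
            = ∑ pq ∈ D, ((Gf.filter (fun z => pq.1 ∈ gball G z (lam * r))).card : ℝ)
                * (F pq.1 - F pq.2) ^ 2 :=
          sum_filter_exchange Gf D (fun z pq => pq.1 ∈ gball G z (lam * r)) _
        have hcnt : ∀ pq : V × V,
            ((Gf.filter (fun z => pq.1 ∈ gball G z (lam * r))).card : ℝ) ≤ bstar := by
          intro pq
          rw [hbstar]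
          refine center_count hconn hα hcL hcU hvol hr1 hlam hb0.le hover pq.1
            (Gf.filter (fun z => pq.1 ∈ gball G z (lam * r))) ?_ ?_
          · intro z hz
            rw [Finset.mem_coe, Finset.mem_filter] at hz
            exact hGfZ (Finset.mem_coe.mpr hz.1)
          · intro ζ hζ
            exact (Finset.mem_filter.mp hζ).2
        calc (∑ z ∈ Gf, ∑ x ∈ A.filter (fun x => x ∈ gball G z r), F x ^ 2)
            ≤ CP * r ^ 2 * ∑ z ∈ Gf, pairEnergy G (gball G z (lam * r)) F := hsum1
          _ ≤ CP * r ^ 2 * ∑ z ∈ Gf, ∑ pq ∈ D.filter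
                (fun pq => pq.1 ∈ gball G z (lam * r)), (F pq.1 - F pq.2) ^ 2 := by
              refine mul_le_mul_of_nonneg_left (Finset.sum_le_sum hpe) ?_
              positivity
          _ = CP * r ^ 2 * ∑ pq ∈ D,
                ((Gf.filter (fun z => pq.1 ∈ gball G z (lam * r))).card : ℝ)
                  * (F pq.1 - F pq.2) ^ 2 := by rw [hexch]
          _ ≤ CP * r ^ 2 * ∑ pq ∈ D, bstar * (F pq.1 - F pq.2) ^ 2 := by
              refine mul_le_mul_of_nonneg_left (Finset.sum_le_sum fun pq _ =>
                mul_le_mul_of_nonneg_right (hcnt pq) (sq_nonneg _)) ?_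
              positivity
          _ = CP * r ^ 2 * (bstar * ∑ pq ∈ D, (F pq.1 - F pq.2) ^ 2) := by
              rw [Finset.mul_sum, Finset.mul_sum, Finset.mul_sum]
              try exact Finset.sum_congr rfl fun pq _ => by ring
          _ ≤ CP * r ^ 2 * (bstar * (4 * Q)) := by
              refine mul_le_mul_of_nonneg_left (mul_le_mul_of_nonneg_left hEA hbstar0.le) ?_
              positivity
          _ = 4 * CP * bstar * ((C * E)⁻¹ * Q) := by
              rw [hr2]; ring
      · -- r < 1 : the balls are singletons and the constraint kills each term
        have hzero : ∀ z ∈ Gf,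
            (∑ x ∈ A.filter (fun x => x ∈ gball G z r), F x ^ 2) = 0 := by
          intro z hz
          rw [hGfdef, Set.Finite.mem_toFinset] at hz
          obtain ⟨hzZ, hex⟩ := hz
          have hnum := hcon z hzZ hex
          have hsingle : gball G z r = {z} := by
            ext y
            constructor
            · rintro ⟨hreach, hd⟩
              have hd1 : (G.dist z y : ℝ) < 1 := lt_of_le_of_lt hd hr1
              have hd0 : G.dist z y = 0 := by
                by_contra hne
                have h1 : 1 ≤ G.dist z y := Nat.one_le_iff_ne_zero.mpr hne
                have h2 : (1:ℝ) ≤ (G.dist z y : ℝ) := by exact_mod_cast h1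
                linarith
              rw [Set.mem_singleton_iff]
              exact (hreach.dist_eq_zero_iff.mp hd0).symm
            · intro hy
              rw [Set.mem_singleton_iff] at hy
              rw [hy]
              exact self_mem_gball hrpos.le
          by_cases hzA : z ∈ A
          · have hfz : A.filter (fun x => x ∈ gball G z r) = {z} := by
              ext x
              rw [Finset.mem_filter, hsingle, Set.mem_singleton_iff, Finset.mem_singleton]
              constructor
              · rintro ⟨-, h⟩; exact h
              · rintro rfl; exact ⟨hzA, rfl⟩
            rw [hfz, Finset.sum_singleton]
            rw [hfz, Finset.sum_singleton] at hnum
            have hnd := one_le_ndeg hconn hcL hvol z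
            have hFz : F z = 0 := by
              rcases mul_eq_zero.mp hnum with h | h
              · exact h
              · linarith
            rw [hFz]
            ring
          · have hfz : A.filter (fun x => x ∈ gball G z r) = ∅ := by
              ext x
              rw [Finset.mem_filter, hsingle, Set.mem_singleton_iff]
              simp only [Finset.notMem_empty, iff_false, not_and]
              rintro hxA rfl
              exact hzA hxA
            rw [hfz, Finset.sum_empty]
        have hz0 : (∑ z ∈ Gf, ∑ x ∈ A.filter (fun x => x ∈ gball G z r), F x ^ 2) = 0 :=
          Finset.sum_eq_zero hzero
        rw [hz0]
        have h1 : 0 ≤ (C * E)⁻¹ * Q := mul_nonneg (inv_nonneg.mpr hCE.le) hQ0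
        have h2 : (0:ℝ) ≤ 4 * CP * bstar := by positivity
        exact mul_nonneg h2 h1
    have hKQ : K * (C * E)⁻¹ * Q
        = b * ((C * E)⁻¹ * Q) + 4 * CP * bstar * ((C * E)⁻¹ * Q) := by
      rw [hKdef]; ring
    linarith [hstep1, hsplit, hbad, hgood]
  -- Step E : conclusion
  have hsum_pos : (0:ℝ) < ∑ x ∈ A, F x ^ 2 := by
    obtain ⟨x, hx, hne⟩ := hFne
    exact Finset.sum_pos' (fun y _ => sq_nonneg _) ⟨x, hx, pow_two_pos_of_ne_zero hne⟩
  have hQpos : (0:ℝ) < Q := by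
    by_contra hq
    push_neg at hq
    have : K * (C * E)⁻¹ * Q ≤ 0 := by
      have h1 : 0 ≤ K * (C * E)⁻¹ := by positivity
      exact mul_nonpos_of_nonneg_of_nonpos h1 hq
    linarith
  have h1 : E * (∑ x ∈ A, F x ^ 2) ≤ E * (K * (C * E)⁻¹ * Q) :=
    mul_le_mul_of_nonneg_left hcover hE.le
  have h2 : E * (K * (C * E)⁻¹ * Q) = K * Q / C := by
    field_simp
  have h3 : K * Q / C ≤ Q / 2 := by
    rw [div_le_div_iff₀ hC0 zero_lt_two]
    nlinarith
  linarith


/-- **Landscape Law, upper bound** (Theorem 1.2(i)).  There is a constant `C`, depending only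
on the graph data `α, cL, cU, CP, lam` and the overlap constant `b`, such that for every finite
nonempty `A`, all admissible bond weights and potentials, every `E > 0` and every covering of
`𝕍` by balls of radius `(C·E)^{-1/2}` with finite overlap constant `b`,
`N^A(E) ≤ N_u^{𝒫,A}(C·E)`. -/
theorem landscape_law_upper
    {V : Type*} [Countable V] [Infinite V]
    (G : SimpleGraph V) (hconn : G.Connected)
    (α cL cU CP lam b : ℝ)
    (hα : 1 ≤ α) (hcL : 0 < cL) (hcU : 0 < cU) (hCP : 0 < CP) (hlam : 1 ≤ lam) (hb : 1 ≤ b)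
    (hvol : VolCtrl G α cL cU) (hpi : WeakPI G CP lam) :
    ∃ C : ℝ, 0 < C ∧
      ∀ (A : Finset V), A.Nonempty →
        ∀ (μ : V → V → ℝ) (Vpot : V → ℝ), BondWeights G μ → (∀ x, 0 ≤ Vpot x) →
          ∀ u : V → ℝ, IsLandscape G μ Vpot A u →
            ∀ hM : (HAmat G μ Vpot A).IsHermitian,
              ∀ E : ℝ, 0 < E →
                ∀ Z : Set V, IsCover G Z ((C * E) ^ (-(1 : ℝ) / 2)) b →
                  NA hM E ≤ Nu G u A Z ((C * E) ^ (-(1 : ℝ) / 2)) (C * E) := by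
  classical
  set C : ℝ := max 1 (2 * (4 * CP * (b * cU * (lam + 1) ^ α / cL) + b)) with hCdef
  have hC0 : (0:ℝ) < C := lt_of_lt_of_le zero_lt_one (le_max_left _ _)
  refine ⟨C, hC0, ?_⟩
  intro A hA μ Vpot hμ hV u hu hM E hE Z hZ
  set r : ℝ := (C * E) ^ (-(1:ℝ)/2) with hrdef
  have hCE : 0 < C * E := mul_pos hC0 hE
  -- the set of good centers
  set GSet : Set V := {z ∈ Z | ∃ x ∈ A, x ∈ gball G z r ∧ 1 / u x ≤ C * E} with hGSet
  have hGfin : GSet.Finite := by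
    refine Set.Finite.subset (Set.Finite.biUnion A.finite_toSet
      (fun x _ => gball_finite hcL hvol x r)) ?_
    rintro z ⟨hzZ, x, hxA, hxb, -⟩
    exact Set.mem_biUnion hxA (mem_gball_comm.mp hxb)
  set Gf : Finset V := hGfin.toFinset with hGf
  -- the constraint functionals
  set Φ : (EuclideanSpace ℝ ↥A) →ₗ[ℝ] (↥Gf → ℝ) :=
    { toFun := fun f z => ∑ x : ↥A, f x * (if (↑x : V) ∈ gball G ↑z r then ndeg G ↑x else 0)
      map_add' := by
        intro f g; funext z
        simp only [PiLp.add_apply, add_mul, Pi.add_apply]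
        rw [Finset.sum_add_distrib]
      map_smul' := by
        intro m f; funext z
        simp only [PiLp.smul_apply, smul_eq_mul, RingHom.id_apply, Pi.smul_apply]
        rw [Finset.mul_sum]
        exact Finset.sum_congr rfl fun x _ => by ring } with hΦ
  have hform : ∀ f : EuclideanSpace ℝ ↥A, Φ f = 0 → f ≠ 0 →
      E * ∑ x, f x ^ 2 < ∑ x, f x * (HAmat G μ Vpot A).mulVec f x := by
    intro f hf0 hfne
    set F : V → ℝ := fun y => if h : y ∈ A then f ⟨y, h⟩ else 0 with hF
    have hFA : ∀ x : ↥A, F ↑x = f x := fun x => by rw [hF]; simp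
    have hFsupp : ∀ y, y ∉ A → F y = 0 := fun y hy => by rw [hF]; simp [hy]
    have hFex : ∃ x ∈ A, F x ≠ 0 := by
      by_contra hno
      push_neg at hno
      apply hfne
      ext x
      have := hno ↑x x.2
      rw [hFA x] at this
      simpa using this
    have hcon : ∀ z ∈ Z, (∃ x ∈ A, x ∈ gball G z r ∧ 1 / u x ≤ C * E) →
        (∑ x ∈ A.filter (fun x => x ∈ gball G z r), F x * ndeg G x) = 0 := by
      intro z hzZ hex
      have hzG : z ∈ Gf := hGfin.mem_toFinset.mpr ⟨hzZ, hex⟩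
      have := congrFun hf0 ⟨z, hzG⟩
      simp only [hΦ, LinearMap.coe_mk, AddHom.coe_mk, Pi.zero_apply] at this
      rw [Finset.sum_filter]
      rw [← Finset.sum_coe_sort A (fun x => if x ∈ gball G z r then F x * ndeg G x else 0)]
      refine Eq.trans (Finset.sum_congr rfl fun x _ => ?_) this
      rw [hFA x, mul_ite, mul_zero]
    have hkey := core_bound hconn hα hcL hcU hCP hlam hb hvol hpi hCdef A μ Vpot hμ hV
      u hu E hE Z hZ F hFsupp hFex hcon
    have h1 : (∑ x, f x ^ 2) = ∑ x ∈ A, F x ^ 2 := by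
      rw [← Finset.sum_coe_sort A (fun x => F x ^ 2)]
      exact Finset.sum_congr rfl fun x _ => by rw [hFA x]
    have h2 : (∑ x, f x * (HAmat G μ Vpot A).mulVec f x)
        = ∑ x ∈ A, F x * ((ndeg G x + Vpot x) * F x
            - ∑ y ∈ A.filter (fun y => G.Adj x y), μ x y * F y) := by
      rw [← Finset.sum_coe_sort A (fun x => F x * ((ndeg G x + Vpot x) * F x
            - ∑ y ∈ A.filter (fun y => G.Adj x y), μ x y * F y))]
      refine Finset.sum_congr rfl fun x _ => ?_
      have hmv : (HAmat G μ Vpot A).mulVec f x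
          = (ndeg G ↑x + Vpot ↑x) * f x
            - ∑ y : ↥A, (if G.Adj ↑x ↑y then μ ↑x ↑y else 0) * f y := by
        have hexp : (HAmat G μ Vpot A).mulVec f x = ∑ y : ↥A, HAmat G μ Vpot A x y * f y := by
          rw [Matrix.mulVec, dotProduct]
        rw [hexp]
        have hsplit : ∀ y : ↥A, HAmat G μ Vpot A x y * f y
            = (if x = y then (ndeg G ↑x + Vpot ↑x) * f y else 0)
              - (if G.Adj ↑x ↑y then μ ↑x ↑y else 0) * f y := by
          intro y
          rw [HAmat, sub_mul]
          congr 1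
          rw [ite_mul, zero_mul]
          by_cases hxy : (↑x : V) = (↑y : V)
          · rw [if_pos hxy, if_pos (Subtype.coe_injective hxy)]
          · rw [if_neg hxy, if_neg (fun h => hxy (congrArg _ h))]
        rw [Finset.sum_congr rfl (fun y _ => hsplit y), Finset.sum_sub_distrib,
          Finset.sum_ite_eq]
        simp
      have hsum : (∑ y ∈ A.filter (fun y => G.Adj (↑x : V) y), μ ↑x y * F y)
          = ∑ y : ↥A, (if G.Adj ↑x ↑y then μ ↑x ↑y else 0) * f y := by
        rw [Finset.sum_filter,
          ← Finset.sum_coe_sort A (fun y => if G.Adj ↑x y then μ ↑x y * F y else 0)]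
        refine Finset.sum_congr rfl fun y _ => ?_
        rw [hFA y, ite_mul, zero_mul]
      rw [hFA x, hsum, hmv]
    rw [h1, h2]
    exact hkey
  have hcount := spectral_count hM E Φ hform
  -- conclude
  have hAcard : (0:ℝ) < (A.card : ℝ) := by exact_mod_cast Finset.card_pos.mpr hA
  have hNueq : ({z ∈ Z | ∃ x ∈ A, x ∈ gball G z r ∧ 1 / u x ≤ C * E}).ncard = Gf.card := by
    rw [hGf, Set.ncard_eq_toFinset_card _ hGfin]
  have hGcard : (Fintype.card ↥Gf) = Gf.card := Fintype.card_coe _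
  have hmain : ((Finset.univ.filter fun i => hM.eigenvalues i ≤ E).card : ℝ)
      ≤ (({z ∈ Z | ∃ x ∈ A, x ∈ gball G z r ∧ 1 / u x ≤ C * E}).ncard : ℝ) :=
    calc ((Finset.univ.filter fun i => hM.eigenvalues i ≤ E).card : ℝ)
        ≤ (Fintype.card ↥Gf : ℝ) := by exact_mod_cast hcount
      _ = (({z ∈ Z | ∃ x ∈ A, x ∈ gball G z r ∧ 1 / u x ≤ C * E}).ncard : ℝ) := by
          rw [hGcard, hNueq]
  unfold NA Nu
  rw [div_eq_mul_inv, div_eq_mul_inv]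
  exact mul_le_mul_of_nonneg_right hmain (inv_nonneg.mpr hAcard.le)


end LandscapeGraph
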